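/- Define Θ : ℝ → ℝ by Θ(t) = 1 if t > 0 and Θ(t) = 0 if t ≤ 0. For all functions f_R, f_S, f_T : ℝ → ℝ there exists a unique triple (a, b, c) ∈ ℝ³ such that a = Θ(−f_S(b))·Θ(f_T(c)), b = Θ(−f_T(c))·Θ(f_R(a)), and c = Θ(−f_R(a))·Θ(f_S(b)). Equivalently, the map w : ℝ³ → ℝ³, w(x,y,z) = (Θ(−y)Θ(z), Θ(−z)Θ(x), Θ(−x)Θ(y)), is a tripartite process function with a unique fixed point for every choice of local operations. -/

import Mathlib

/-- The Heaviside step function: `Θ t = 1` for `t > 0` and `Θ t = 0` for `t ≤ 0`. -/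
noncomputable def Θ (t : ℝ) : ℝ := if 0 < t then 1 else 0

lemma theta_mul (u v : ℝ) :
    Θ (-u) * Θ v = if u < 0 ∧ 0 < v then 1 else 0 := by
  unfold Θ
  by_cases h1 : u < 0 <;> by_cases h2 : 0 < v <;> simp [h1, h2, neg_pos]

set_option synthInstance.maxHeartbeats 1000000 in
set_option synthInstance.maxSize 2000 in
set_option maxHeartbeats 1000000 in
lemma boolSolve (rm0 rm1 rp0 rp1 sm0 sm1 sp0 sp1 tm0 tm1 tp0 tp1 : Bool)
    (h1 : (rm0 && rp0) = false) (h2 : (rm1 && rp1) = false)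
    (h3 : (sm0 && sp0) = false) (h4 : (sm1 && sp1) = false)
    (h5 : (tm0 && tp0) = false) (h6 : (tm1 && tp1) = false) :
    ∃! q : Bool × Bool × Bool,
      q.1 = (cond q.2.1 sm1 sm0 && cond q.2.2 tp1 tp0) ∧
      q.2.1 = (cond q.2.2 tm1 tm0 && cond q.1 rp1 rp0) ∧
      q.2.2 = (cond q.1 rm1 rm0 && cond q.2.1 sp1 sp0) := by
  revert h1 h2 h3 h4 h5 h6
  revert rm0 rm1 rp0 rp1 sm0 sm1 sp0 sp1 tm0 tm1 tp0 tp1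
  simp only [ExistsUnique]
  decide

lemma cond_apply (f : Bool → Bool) (b : Bool) : cond b (f true) (f false) = f b := by
  cases b <;> rfl

/-- The map `w(x,y,z) = (Θ(−y)Θ(z), Θ(−z)Θ(x), Θ(−x)Θ(y))` is a tripartite process
function with a unique fixed point for every choice of local operations: for all
`f_R, f_S, f_T : ℝ → ℝ` there is a unique `(a,b,c) ∈ ℝ³` with
`a = Θ(−f_S(b))Θ(f_T(c))`, `b = Θ(−f_T(c))Θ(f_R(a))`, `c = Θ(−f_R(a))Θ(f_S(b))`. -/
theorem heaviside_process_unique_fixed_point (fR fS fT : ℝ → ℝ) :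
    ∃! p : ℝ × ℝ × ℝ,
      p.1 = Θ (-(fS p.2.1)) * Θ (fT p.2.2) ∧
      p.2.1 = Θ (-(fT p.2.2)) * Θ (fR p.1) ∧
      p.2.2 = Θ (-(fR p.1)) * Θ (fS p.2.1) := by
  set rm : Bool → Bool := fun b => decide (fR (cond b (1:ℝ) 0) < 0) with hrm
  set rp : Bool → Bool := fun b => decide (0 < fR (cond b (1:ℝ) 0)) with hrp
  set sm : Bool → Bool := fun b => decide (fS (cond b (1:ℝ) 0) < 0) with hsm
  set sp : Bool → Bool := fun b => decide (0 < fS (cond b (1:ℝ) 0)) with hsp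
  set tm : Bool → Bool := fun b => decide (fT (cond b (1:ℝ) 0) < 0) with htm
  set tp : Bool → Bool := fun b => decide (0 < fT (cond b (1:ℝ) 0)) with htp
  have hc : ∀ (f : ℝ → ℝ) (b : Bool),
      (decide (f (cond b (1:ℝ) 0) < 0) && decide (0 < f (cond b (1:ℝ) 0))) = false := by
    intro f b
    rw [← Bool.decide_and, decide_eq_false_iff_not]
    rintro ⟨h1, h2⟩; linarith
  obtain ⟨q, hq, huniq⟩ := boolSolve (rm false) (rm true) (rp false) (rp true)
    (sm false) (sm true) (sp false) (sp true) (tm false) (tm true) (tp false) (tp true)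
    (hc fR false) (hc fR true) (hc fS false) (hc fS true) (hc fT false) (hc fT true)
  obtain ⟨a, b, c⟩ := q
  simp only [cond_apply] at hq huniq
  obtain ⟨hqa, hqb, hqc⟩ := hq
  refine ⟨(cond a (1:ℝ) 0, cond b (1:ℝ) 0, cond c (1:ℝ) 0), ?_, ?_⟩
  · refine ⟨?_, ?_, ?_⟩ <;> simp only [theta_mul] <;>
      rw [← Bool.cond_decide, Bool.decide_and]
    · rw [hqa]
    · rw [hqb]
    · rw [hqc]
  · rintro ⟨x, y, z⟩ ⟨e1, e2, e3⟩
    simp only [theta_mul] at e1 e2 e3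
    rw [← Bool.cond_decide, Bool.decide_and] at e1 e2 e3
    set a' : Bool := (decide (fS y < 0) && decide (0 < fT z)) with ha'
    set b' : Bool := (decide (fT z < 0) && decide (0 < fR x)) with hb'
    set c' : Bool := (decide (fR x < 0) && decide (0 < fS y)) with hc'
    have key : a' = (sm b' && tp c') ∧ b' = (tm c' && rp a') ∧ c' = (rm a' && sp b') := by
      rw [hsm, htp, htm, hrp, hrm, hsp]
      simp only [← e1, ← e2, ← e3]
      exact ⟨ha', hb', hc'⟩
    have heq := huniq (a', b', c') key
    simp only [Prod.mk.injEq] at heq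
    rw [e1, e2, e3, heq.1, heq.2.1, heq.2.2]
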